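/- In SL₂(ℤ), let α = [[1,1],[0,1]] and β = [[1,0],[−4,1]]. Then the congruence subgroup Γ₁(4) = {[[a,b],[c,d]] ∈ SL₂(ℤ) : a ≡ d ≡ 1 (mod 4) and c ≡ 0 (mod 4)} is equal to the subgroup of SL₂(ℤ) generated by α and β. Moreover, if Λ denotes the subgroup of GL₂(ℚ) generated by α and γ = [[0,1],[−4,0]], then a matrix g ∈ SL₂(ℤ) lies in Λ (when viewed as an element of GL₂(ℚ)) if and only if g ∈ Γ₁(4). -/

import Mathlib

open Matrix CongruenceSubgroup
open scoped MatrixGroups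

/-- `α = [[1,1],[0,1]]` as an element of `SL₂(ℤ)`. -/
def alphaSL : SL(2, ℤ) := ⟨!![1, 1; 0, 1], by norm_num [Matrix.det_fin_two_of]⟩

/-- `β = [[1,0],[-4,1]]` as an element of `SL₂(ℤ)`. -/
def betaSL : SL(2, ℤ) := ⟨!![1, 0; -4, 1], by norm_num [Matrix.det_fin_two_of]⟩

/-- `α = [[1,1],[0,1]]` as an element of `GL₂(ℚ)`. -/
noncomputable def alphaGL : GL (Fin 2) ℚ :=
  Matrix.GeneralLinearGroup.mkOfDetNeZero !![1, 1; 0, 1] (by norm_num [Matrix.det_fin_two_of])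

/-- `γ = [[0,1],[-4,0]]` as an element of `GL₂(ℚ)`. -/
noncomputable def gammaGL : GL (Fin 2) ℚ :=
  Matrix.GeneralLinearGroup.mkOfDetNeZero !![0, 1; -4, 0] (by norm_num [Matrix.det_fin_two_of])

def Amat (t : ℤ) : SL(2, ℤ) := ⟨!![1, t; 0, 1], by norm_num [Matrix.det_fin_two_of]⟩
def Bmat (t : ℤ) : SL(2, ℤ) := ⟨!![1, 0; t, 1], by norm_num [Matrix.det_fin_two_of]⟩

lemma Amat_mul (s t : ℤ) : Amat s * Amat t = Amat (s + t) := by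
  apply Subtype.ext; rw [Matrix.SpecialLinearGroup.coe_mul]; simp [Amat, Matrix.mul_fin_two, add_comm]

lemma Bmat_mul (s t : ℤ) : Bmat s * Bmat t = Bmat (s + t) := by
  apply Subtype.ext; rw [Matrix.SpecialLinearGroup.coe_mul]; simp [Bmat, Matrix.mul_fin_two, add_comm]

lemma Amat_zero : Amat 0 = 1 := by
  apply Subtype.ext; simp [Amat]; exact (Matrix.one_fin_two).symm

lemma Bmat_zero : Bmat 0 = 1 := by
  apply Subtype.ext; simp [Bmat]; exact (Matrix.one_fin_two).symm

lemma Amat_inv (t : ℤ) : (Amat t)⁻¹ = Amat (-t) := by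
  apply inv_eq_of_mul_eq_one_right; rw [Amat_mul]; simp [Amat_zero]

lemma Bmat_inv (t : ℤ) : (Bmat t)⁻¹ = Bmat (-t) := by
  apply inv_eq_of_mul_eq_one_right; rw [Bmat_mul]; simp [Bmat_zero]

lemma Amat_mem (t : ℤ) : Amat t ∈ Subgroup.closure {alphaSL, betaSL} := by
  have h1 : Amat 1 ∈ Subgroup.closure {alphaSL, betaSL} := by
    apply Subgroup.subset_closure; left; rfl
  induction t using Int.induction_on with
  | zero => rw [Amat_zero]; exact one_mem _
  | succ n ih => rw [show ((n:ℤ)+1) = (n:ℤ) + 1 by ring, ← Amat_mul]; exact mul_mem ih h1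
  | pred n ih =>
      rw [show (-(n:ℤ)-1) = -(n:ℤ) + (-1) by ring, ← Amat_mul]
      exact mul_mem ih (by rw [← Amat_inv]; exact inv_mem h1)

lemma Bmat_mem (m : ℤ) : Bmat (4 * m) ∈ Subgroup.closure {alphaSL, betaSL} := by
  have h1 : Bmat (-4) ∈ Subgroup.closure {alphaSL, betaSL} := by
    apply Subgroup.subset_closure; right; rfl
  have h2 : Bmat 4 ∈ Subgroup.closure {alphaSL, betaSL} := by
    rw [show (4:ℤ) = -(-4) by norm_num, ← Bmat_inv]; exact inv_mem h1
  induction m using Int.induction_on with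
  | zero => rw [mul_zero, Bmat_zero]; exact one_mem _
  | succ n ih => rw [show 4*((n:ℤ)+1) = 4*(n:ℤ) + 4 by ring, ← Bmat_mul]; exact mul_mem ih h2
  | pred n ih => rw [show 4*(-(n:ℤ)-1) = 4*(-(n:ℤ)) + (-4) by ring, ← Bmat_mul]; exact mul_mem ih h1

lemma prod_entry (s t : ℤ) (g : SL(2,ℤ)) :
    ((Bmat t * (Amat s * g)) 1 0) = t * (g 0 0 + s * g 1 0) + g 1 0 := by
  rw [Matrix.SpecialLinearGroup.coe_mul, Matrix.SpecialLinearGroup.coe_mul]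
  simp [Bmat, Amat, Matrix.mul_apply, Fin.sum_univ_two, Matrix.vecMul, dotProduct,
    Matrix.vecHead, Matrix.vecTail]

/-- balanced division -/
lemma bal (a c : ℤ) (hc : c ≠ 0) : ∃ n : ℤ, 2 * (a + n * c).natAbs ≤ c.natAbs := by
  rcases lt_trichotomy c 0 with h | h | h
  · have h' : 0 < -c := by omega
    have key : ∀ (b : ℤ), 0 < b → ∃ n : ℤ, 2 * (a + n * b).natAbs ≤ b.natAbs := by
      intro b hb
      rcases le_or_gt (2 * (a % b)) b with hr | hr
      · refine ⟨-(a / b), ?_⟩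
        have := Int.emod_nonneg a (by omega : b ≠ 0)
        have heq : a + -(a / b) * b = a % b := by
          rw [Int.emod_def]; ring
        rw [heq]; omega
      · refine ⟨-(a / b) - 1, ?_⟩
        have := Int.emod_lt_of_pos a hb
        have := Int.emod_nonneg a (by omega : b ≠ 0)
        have heq : a + (-(a / b) - 1) * b = a % b - b := by
          rw [Int.emod_def]; ring
        rw [heq]; omega
    obtain ⟨n, hn⟩ := key (-c) h'
    exact ⟨-n, by rw [show a + -n * c = a + n * (-c) by ring]; simpa using hn⟩
  · exact absurd h hc
  · rcases le_or_gt (2 * (a % c)) c with hr | hr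
    · refine ⟨-(a / c), ?_⟩
      have := Int.emod_nonneg a hc
      have heq : a + -(a / c) * c = a % c := by rw [Int.emod_def]; ring
      rw [heq]; omega
    · refine ⟨-(a / c) - 1, ?_⟩
      have := Int.emod_lt_of_pos a h
      have := Int.emod_nonneg a hc
      have heq : a + (-(a / c) - 1) * c = a % c - c := by rw [Int.emod_def]; ring
      rw [heq]; omega

lemma zmod_one_iff (a : ℤ) : ((a : ℤ) : ZMod 4) = 1 ↔ (4:ℤ) ∣ a - 1 := by
  constructor
  · intro h
    have : ((a - 1 : ℤ) : ZMod 4) = 0 := by push_cast [h]; ring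
    exact (ZMod.intCast_zmod_eq_zero_iff_dvd _ 4).mp this
  · intro h
    have h2 : ((a - 1 : ℤ) : ZMod 4) = 0 := (ZMod.intCast_zmod_eq_zero_iff_dvd _ 4).mpr h
    push_cast at h2
    linear_combination h2

lemma zmod_zero_iff (a : ℤ) : ((a : ℤ) : ZMod 4) = 0 ↔ (4:ℤ) ∣ a :=
  ZMod.intCast_zmod_eq_zero_iff_dvd _ 4

lemma gamma1_iff (g : SL(2,ℤ)) : g ∈ Gamma1 4 ↔
    (4:ℤ) ∣ g 0 0 - 1 ∧ (4:ℤ) ∣ g 1 1 - 1 ∧ (4:ℤ) ∣ g 1 0 := by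
  rw [Gamma1_mem, zmod_one_iff, zmod_one_iff, zmod_zero_iff]

lemma Amat_gamma1 (t : ℤ) : Amat t ∈ Gamma1 4 := by
  rw [gamma1_iff]; simp [Amat]

lemma Bmat_gamma1 (m : ℤ) : Bmat (4 * m) ∈ Gamma1 4 := by
  rw [gamma1_iff]; simp [Bmat]

lemma key : ∀ N : ℕ, ∀ g : SL(2,ℤ), g ∈ Gamma1 4 → (g 1 0).natAbs ≤ N →
    g ∈ Subgroup.closure {alphaSL, betaSL} := by
  intro N
  induction N using Nat.strong_induction_on with
  | _ N ih =>
    intro g hg hle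
    rw [gamma1_iff] at hg
    obtain ⟨ha, hd, hc⟩ := hg
    by_cases hc0 : g 1 0 = 0
    · -- c = 0 : g = Amat b
      have hdet : g 0 0 * g 1 1 - g 0 1 * g 1 0 = 1 := by
        have := g.2; rwa [Matrix.det_fin_two] at this
      have h1 : g 0 0 * g 1 1 = 1 := by rw [hc0] at hdet; linarith
      have ha1 : g 0 0 = 1 ∧ g 1 1 = 1 := by
        rcases Int.eq_one_or_neg_one_of_mul_eq_one' h1 with h | h
        · exact h
        · exfalso; obtain ⟨h', _⟩ := h; rw [h'] at ha; omega
      have hgA : g = Amat (g 0 1) := by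
        apply Subtype.ext
        ext i j
        fin_cases i <;> fin_cases j <;>
          simp [Amat, ha1.1, ha1.2, hc0]
      rw [hgA]; exact Amat_mem _
    · -- c ≠ 0
      obtain ⟨n, hn⟩ := bal (g 0 0) (g 1 0) hc0
      set a' := g 0 0 + n * g 1 0 with ha'
      have ha'4 : (4:ℤ) ∣ a' - 1 := by
        obtain ⟨x, hx⟩ := ha; obtain ⟨y, hy⟩ := hc
        exact ⟨x + n * y, by rw [ha']; linear_combination hx + n * hy⟩
      have ha'0 : a' ≠ 0 := by intro h; rw [h] at ha'4; omega
      have hstrict : 2 * a'.natAbs < (g 1 0).natAbs := by omega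
      obtain ⟨m, hm⟩ := bal (g 1 0 / 4) a' ha'0
      have hdiv : 4 * (g 1 0 / 4) = g 1 0 := by omega
      set h := Bmat (4 * m) * (Amat n * g) with hh
      have hent : h 1 0 = 4 * (g 1 0 / 4 + m * a') := by
        rw [hh, prod_entry, ← ha']; linear_combination -hdiv
      set w := g 1 0 / 4 + m * a' with hw
      have hlt : (h 1 0).natAbs < N := by
        rw [hent]; omega
      have hhg : h ∈ Gamma1 4 :=
        Subgroup.mul_mem _ (Bmat_gamma1 m)
          (Subgroup.mul_mem _ (Amat_gamma1 n) (by rw [gamma1_iff]; exact ⟨ha, hd, hc⟩))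
      have hmem := ih (h 1 0).natAbs hlt h hhg (le_refl _)
      have hgdec : g = (Amat n)⁻¹ * ((Bmat (4*m))⁻¹ * h) := by rw [hh]; group
      rw [hgdec]
      exact mul_mem (inv_mem (Amat_mem n)) (mul_mem (inv_mem (Bmat_mem m)) hmem)

noncomputable def toQ : SL(2, ℤ) →* GL (Fin 2) ℚ :=
  Matrix.SpecialLinearGroup.toGL.comp (Matrix.SpecialLinearGroup.map (Int.castRingHom ℚ))

lemma toQ_coe (g : SL(2, ℤ)) :
    (toQ g : Matrix (Fin 2) (Fin 2) ℚ) =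
      ((g : Matrix (Fin 2) (Fin 2) ℤ)).map (Int.cast : ℤ → ℚ) := rfl

lemma alphaGL_coe : (alphaGL : Matrix (Fin 2) (Fin 2) ℚ) = !![1, 1; 0, 1] := rfl
lemma gammaGL_coe : (gammaGL : Matrix (Fin 2) (Fin 2) ℚ) = !![0, 1; -4, 0] := rfl

lemma toQ_alpha : toQ alphaSL = alphaGL := by
  apply Units.ext
  rw [toQ_coe, alphaGL_coe]
  ext i j
  fin_cases i <;> fin_cases j <;> simp [alphaSL]

lemma toQ_beta_coe : (toQ betaSL : Matrix (Fin 2) (Fin 2) ℚ) = !![1, 0; -4, 1] := by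
  rw [toQ_coe]
  ext i j
  fin_cases i <;> fin_cases j <;> simp [betaSL]

lemma conj1 : gammaGL * toQ alphaSL = toQ betaSL * gammaGL := by
  apply Units.ext
  rw [Units.val_mul, Units.val_mul, toQ_beta_coe, toQ_alpha, alphaGL_coe, gammaGL_coe]
  norm_num [Matrix.mul_fin_two]

lemma conj2 : gammaGL * toQ betaSL = toQ alphaSL * gammaGL := by
  apply Units.ext
  rw [Units.val_mul, Units.val_mul, toQ_beta_coe, toQ_alpha, alphaGL_coe, gammaGL_coe]
  norm_num [Matrix.mul_fin_two]

noncomputable def Ssub : Subgroup (GL (Fin 2) ℚ) :=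
  Subgroup.map toQ (Subgroup.closure {alphaSL, betaSL})

lemma Ssub_eq : Ssub = Subgroup.closure {toQ alphaSL, toQ betaSL} := by
  rw [Ssub, MonoidHom.map_closure, Set.image_insert_eq, Set.image_singleton]

lemma conj1' : gammaGL * toQ alphaSL * gammaGL⁻¹ = toQ betaSL :=
  mul_inv_eq_iff_eq_mul.mpr conj1

lemma conj2' : gammaGL * toQ betaSL * gammaGL⁻¹ = toQ alphaSL :=
  mul_inv_eq_iff_eq_mul.mpr conj2

lemma conj_mem : ∀ u ∈ Ssub, gammaGL * u * gammaGL⁻¹ ∈ Ssub := by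
  rw [Ssub_eq]
  intro u hu
  induction hu using Subgroup.closure_induction with
  | mem x hx =>
      rcases hx with rfl | rfl
      · rw [conj1']; exact Subgroup.subset_closure (by right; rfl)
      · rw [conj2']; exact Subgroup.subset_closure (by left; rfl)
  | one => simpa using one_mem _
  | mul x y hx hy ihx ihy =>
      have : gammaGL * (x * y) * gammaGL⁻¹ =
          (gammaGL * x * gammaGL⁻¹) * (gammaGL * y * gammaGL⁻¹) := by group
      rw [this]; exact mul_mem ihx ihy
  | inv x hx ihx =>
      have : gammaGL * x⁻¹ * gammaGL⁻¹ = (gammaGL * x * gammaGL⁻¹)⁻¹ := by group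
      rw [this]; exact inv_mem ihx

lemma conj_mem' : ∀ u ∈ Ssub, gammaGL⁻¹ * u * gammaGL ∈ Ssub := by
  rw [Ssub_eq]
  intro u hu
  induction hu using Subgroup.closure_induction with
  | mem x hx =>
      rcases hx with rfl | rfl
      · have : gammaGL⁻¹ * toQ alphaSL * gammaGL = toQ betaSL := by
          rw [← conj2']; group
        rw [this]; exact Subgroup.subset_closure (by right; rfl)
      · have : gammaGL⁻¹ * toQ betaSL * gammaGL = toQ alphaSL := by
          rw [← conj1']; group
        rw [this]; exact Subgroup.subset_closure (by left; rfl)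
  | one => simpa using one_mem _
  | mul x y hx hy ihx ihy =>
      have : gammaGL⁻¹ * (x * y) * gammaGL =
          (gammaGL⁻¹ * x * gammaGL) * (gammaGL⁻¹ * y * gammaGL) := by group
      rw [this]; exact mul_mem ihx ihy
  | inv x hx ihx =>
      have : gammaGL⁻¹ * x⁻¹ * gammaGL = (gammaGL⁻¹ * x * gammaGL)⁻¹ := by group
      rw [this]; exact inv_mem ihx

lemma gamma_normalizer : gammaGL ∈ Subgroup.normalizer (Ssub : Set (GL (Fin 2) ℚ)) := by
  rw [Subgroup.mem_normalizer_iff]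
  intro h
  constructor
  · exact fun hh => conj_mem h hh
  · intro hh
    have := conj_mem' _ hh
    have e : gammaGL⁻¹ * (gammaGL * h * gammaGL⁻¹) * gammaGL = h := by group
    rwa [e] at this

lemma det_gammaGL : ((Matrix.GeneralLinearGroup.det gammaGL : ℚˣ) : ℚ) = 4 := by
  have : (Matrix.GeneralLinearGroup.det gammaGL : ℚˣ).val = (gammaGL : Matrix (Fin 2) (Fin 2) ℚ).det := rfl
  rw [this, gammaGL_coe]
  norm_num [Matrix.det_fin_two_of]

lemma det_toQ (h : SL(2, ℤ)) : Matrix.GeneralLinearGroup.det (toQ h) = 1 :=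
  Matrix.SpecialLinearGroup.coeToGL_det _

lemma n_eq_zero (x : GL (Fin 2) ℚ) (h : SL(2,ℤ)) (n : ℤ) (hx : x = toQ h * gammaGL ^ n)
    (hd : ((Matrix.GeneralLinearGroup.det x : ℚˣ) : ℚ) = 1) : n = 0 := by
  have := congrArg Matrix.GeneralLinearGroup.det hx
  rw [_root_.map_mul, _root_.map_zpow, det_toQ, one_mul] at this
  have hval : ((Matrix.GeneralLinearGroup.det x : ℚˣ) : ℚ) = ((4:ℚ)) ^ n := by
    rw [this, Units.val_zpow_eq_zpow_val, det_gammaGL]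
  have h4 : (4:ℚ) ^ n = (4:ℚ) ^ (0:ℤ) := by rw [zpow_zero]; rw [← hval, hd]
  exact zpow_right_injective₀ (by norm_num) (by norm_num) h4

lemma easy1 : Subgroup.closure {alphaSL, betaSL} ≤ Gamma1 4 := by
  rw [Subgroup.closure_le]
  rintro x (rfl | rfl) <;>
    · rw [SetLike.mem_coe, gamma1_iff]
      refine ⟨?_, ?_, ?_⟩ <;> simp [alphaSL, betaSL]


theorem gamma1_four_eq_closure (g : SL(2, ℤ)) :
    (g ∈ Subgroup.closure {alphaSL, betaSL} ↔ g ∈ Gamma1 4) ∧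
    ((∃ x ∈ Subgroup.closure {alphaGL, gammaGL},
        (x : Matrix (Fin 2) (Fin 2) ℚ) =
          ((g : Matrix (Fin 2) (Fin 2) ℤ)).map (Int.cast : ℤ → ℚ)) ↔
      g ∈ Gamma1 4) := by
  have part1 : ∀ h : SL(2,ℤ), h ∈ Subgroup.closure {alphaSL, betaSL} ↔ h ∈ Gamma1 4 :=
    fun h => ⟨fun hh => easy1 hh, fun hh => key (h 1 0).natAbs h hh le_rfl⟩
  refine ⟨part1 g, ?_, fun hg => ?_⟩
  · -- mp of part 2
    rintro ⟨x, hxΛ, hmat⟩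
    have hnorm : ∀ n : ℤ, gammaGL ^ n ∈ Subgroup.normalizer (Ssub : Set (GL (Fin 2) ℚ)) :=
      fun n => Subgroup.zpow_mem _ gamma_normalizer n
    have decomp : ∀ y ∈ Subgroup.closure {alphaGL, gammaGL},
        ∃ n : ℤ, y * (gammaGL ^ n)⁻¹ ∈ Ssub := by
      intro y hy
      induction hy using Subgroup.closure_induction with
      | mem y hy =>
          rcases hy with rfl | rfl
          · refine ⟨0, ?_⟩
            have e : alphaGL * (gammaGL ^ (0:ℤ))⁻¹ = alphaGL := by group
            rw [e]
            exact Subgroup.mem_map.mpr ⟨alphaSL, Subgroup.subset_closure (by left; rfl), toQ_alpha⟩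
          · refine ⟨1, ?_⟩
            have e : gammaGL * (gammaGL ^ (1:ℤ))⁻¹ = 1 := by group
            rw [e]; exact one_mem _
      | one => exact ⟨0, by simpa using one_mem _⟩
      | mul x y hx hy ihx ihy =>
          obtain ⟨n, hn⟩ := ihx; obtain ⟨m, hm⟩ := ihy
          refine ⟨n + m, ?_⟩
          have e : x * y * (gammaGL ^ (n+m))⁻¹ =
              (x * (gammaGL ^ n)⁻¹) * (gammaGL ^ n * (y * (gammaGL ^ m)⁻¹) * (gammaGL ^ n)⁻¹) := by
            group
          rw [e]
          exact mul_mem hn ((Subgroup.mem_normalizer_iff.mp (hnorm n) _).mp hm)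
      | inv x hx ihx =>
          obtain ⟨n, hn⟩ := ihx
          refine ⟨-n, ?_⟩
          have e : x⁻¹ * (gammaGL ^ (-n))⁻¹ =
              (gammaGL ^ n)⁻¹ * (x * (gammaGL ^ n)⁻¹)⁻¹ * ((gammaGL ^ n)⁻¹)⁻¹ := by group
          rw [e]
          exact (Subgroup.mem_normalizer_iff.mp (inv_mem (hnorm n)) _).mp (inv_mem hn)
    obtain ⟨n, hn⟩ := decomp x hxΛ
    obtain ⟨h, hhcl, hhq⟩ := Subgroup.mem_map.mp hn
    have hx : x = toQ h * gammaGL ^ n := by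
      rw [hhq]; group
    have hdx : ((Matrix.GeneralLinearGroup.det x : ℚˣ) : ℚ) = 1 := by
      have hv : ((Matrix.GeneralLinearGroup.det x : ℚˣ) : ℚ) = (x : Matrix (Fin 2) (Fin 2) ℚ).det := rfl
      rw [hv, hmat,
        show ((g : Matrix (Fin 2) (Fin 2) ℤ)).map (Int.cast : ℤ → ℚ) =
          (Int.castRingHom ℚ).mapMatrix (g : Matrix (Fin 2) (Fin 2) ℤ) from rfl,
        ← RingHom.map_det, g.prop]
      simp
    have hn0 : n = 0 := n_eq_zero x h n hx hdx
    rw [hn0] at hx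
    have hx' : x = toQ h := by rw [hx]; group
    have hmq : ((h : Matrix (Fin 2) (Fin 2) ℤ)).map (Int.cast : ℤ → ℚ) =
        ((g : Matrix (Fin 2) (Fin 2) ℤ)).map (Int.cast : ℤ → ℚ) := by
      rw [← toQ_coe, ← hx', hmat]
    have hge : h = g := by
      apply Subtype.ext
      ext i j
      have := congrFun (congrFun hmq i) j
      simp only [Matrix.map_apply] at this
      exact_mod_cast this
    rw [← hge]
    exact (part1 h).mp hhcl
  · -- mpr of part 2
    have hcl := (part1 g).mpr hg
    refine ⟨toQ g, ?_, toQ_coe g⟩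
    have hle : Ssub ≤ Subgroup.closure {alphaGL, gammaGL} := by
      rw [Ssub_eq, Subgroup.closure_le]
      rintro y (rfl | rfl)
      · rw [toQ_alpha]; exact Subgroup.subset_closure (by left; rfl)
      · rw [← conj1', toQ_alpha]
        exact mul_mem
          (mul_mem (Subgroup.subset_closure (by right; rfl))
            (Subgroup.subset_closure (by left; rfl)))
          (inv_mem (Subgroup.subset_closure (by right; rfl)))
    exact hle (Subgroup.mem_map.mpr ⟨g, hcl, rfl⟩)
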